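/- arXiv:math/0308196 — 2 statements merged into one kernel-verified Lean document; each statement's English description precedes it below -/
import Mathlib

section
/- Let V be a real vector space with a symmetric bilinear form and let e_1,...,e_n satisfy: (e_i,e_j) ≥ 0 for i≠j, and for every nonempty S ⊆ {1,...,n} and j ∈ S, (Σ_{i∈S} e_i, e_j) < 0. Then the bilinear form is negative definite on the cone Σ_i ℝ_{≥0} e_i: that is, every x = Σ_i c_i e_i with c_i ≥ 0 and x ≠ 0 satisfies (x, x) < 0. -/
/-- Auxiliary: on any finset with strictly positive coefficients, the square is
nonpositive, and strictly negative when the finset is nonempty. Proof by strong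
induction: subtract the minimal coefficient times the full sum. -/
theorem stmt_3_aux {V : Type*} [AddCommGroup V] [Module ℝ V]
    (B : V →ₗ[ℝ] V →ₗ[ℝ] ℝ) (hsymm : ∀ x y, B x y = B y x)
    {n : ℕ} (e : Fin n → V)
    (hS : ∀ S : Finset (Fin n), S.Nonempty → ∀ j ∈ S, B (∑ i ∈ S, e i) (e j) < 0) :
    ∀ (T : Finset (Fin n)) (c : Fin n → ℝ), (∀ i ∈ T, 0 < c i) →
      B (∑ i ∈ T, c i • e i) (∑ i ∈ T, c i • e i) ≤ 0 ∧
      (T.Nonempty → B (∑ i ∈ T, c i • e i) (∑ i ∈ T, c i • e i) < 0) := by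
  intro T
  induction T using Finset.strongInduction with
  | _ T ih =>
    intro c hc
    rcases T.eq_empty_or_nonempty with rfl | hT
    · refine ⟨by simp, fun h => absurd h (by simp)⟩
    · set m := T.inf' hT c with hm_def
      obtain ⟨j, hjT, hj⟩ := T.exists_mem_eq_inf' hT c
      have hm : 0 < m := by rw [hm_def, hj]; exact hc j hjT
      set d : Fin n → ℝ := fun i => c i - m with hd_def
      set T' := T.filter (fun i => 0 < d i) with hT'_def
      have hT'ss : T' ⊆ T := Finset.filter_subset _ _
      have hd0 : ∀ i ∈ T, 0 ≤ d i := fun i hi => sub_nonneg.2 (Finset.inf'_le c hi)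
      have hjT' : j ∉ T' := by
        simp only [hT'_def, Finset.mem_filter]
        rintro ⟨-, hpos⟩
        simp only [hd_def] at hpos
        rw [hm_def, hj] at hpos
        linarith
      have hssub : T' ⊂ T := Finset.ssubset_iff_of_subset hT'ss |>.2 ⟨j, hjT, hjT'⟩
      set u := ∑ i ∈ T, e i with hu_def
      set y := ∑ i ∈ T', d i • e i with hy_def
      -- decomposition
      have hdec : ∑ i ∈ T, c i • e i = m • u + y := by
        have h1 : (∑ i ∈ T', d i • e i) = ∑ i ∈ T, d i • e i := by
          refine Finset.sum_subset hT'ss (fun i hi hni => ?_)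
          have : d i = 0 := by
            rcases lt_or_eq_of_le (hd0 i hi) with h | h
            · exact absurd (Finset.mem_filter.2 ⟨hi, h⟩) hni
            · exact h.symm
          simp [this]
        rw [hy_def, h1, hu_def, Finset.smul_sum, ← Finset.sum_add_distrib]
        refine Finset.sum_congr rfl (fun i hi => ?_)
        rw [← add_smul]
        congr 1
        simp [hd_def]
      -- key sign facts
      have hBuej : ∀ i ∈ T, B u (e i) < 0 := fun i hi => hS T hT i hi
      have hBuu : B u u < 0 := by
        have : B u u = ∑ i ∈ T, B u (e i) := by rw [hu_def]; exact map_sum _ _ _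
        rw [this]
        exact Finset.sum_neg hBuej hT
      have hBuy : B u y ≤ 0 := by
        have : B u y = ∑ i ∈ T', d i * B u (e i) := by
          rw [hy_def, map_sum]
          exact Finset.sum_congr rfl fun i hi => by rw [map_smul, smul_eq_mul]
        rw [this]
        refine Finset.sum_nonpos fun i hi => ?_
        exact mul_nonpos_of_nonneg_of_nonpos (hd0 i (hT'ss hi)) (hBuej i (hT'ss hi)).le
      have hByu : B y u ≤ 0 := by rw [hsymm]; exact hBuy
      have hByy : B y y ≤ 0 :=
        (ih T' hssub d (fun i hi => (Finset.mem_filter.1 hi).2)).1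
      have hexp : B (m • u + y) (m • u + y)
          = m * (m * B u u) + m * B u y + (m * B y u + B y y) := by
        simp [map_add, map_smul, LinearMap.add_apply, LinearMap.smul_apply, smul_eq_mul]
        ring
      have h1 : m * (m * B u u) < 0 := mul_neg_of_pos_of_neg hm (mul_neg_of_pos_of_neg hm hBuu)
      have h2 : m * B u y ≤ 0 := mul_nonpos_of_nonneg_of_nonpos hm.le hBuy
      have h3 : m * B y u ≤ 0 := mul_nonpos_of_nonneg_of_nonpos hm.le hByu
      have hlt : B (∑ i ∈ T, c i • e i) (∑ i ∈ T, c i • e i) < 0 := by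
        rw [hdec, hexp]; linarith
      exact ⟨hlt.le, fun _ => hlt⟩

/-- Under the subset-negativity hypothesis, the symmetric bilinear
form is negative definite on the cone `∑ ℝ≥0 e i`: every nonzero nonnegative
combination has negative square. -/
theorem stmt_3 {V : Type*} [AddCommGroup V] [Module ℝ V]
    (B : V →ₗ[ℝ] V →ₗ[ℝ] ℝ) (hsymm : ∀ x y, B x y = B y x)
    {n : ℕ} (e : Fin n → V)
    (hij : ∀ i j, i ≠ j → 0 ≤ B (e i) (e j))
    (hS : ∀ S : Finset (Fin n), S.Nonempty → ∀ j ∈ S, B (∑ i ∈ S, e i) (e j) < 0) :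
    ∀ c : Fin n → ℝ, (∀ i, 0 ≤ c i) → (∑ i, c i • e i) ≠ 0 →
      B (∑ i, c i • e i) (∑ i, c i • e i) < 0 := by
  intro c hc hx
  set T := Finset.univ.filter (fun i => 0 < c i) with hT_def
  have hsum : (∑ i ∈ T, c i • e i) = ∑ i, c i • e i := by
    refine Finset.sum_subset (Finset.filter_subset _ _) (fun i _ hni => ?_)
    have : c i = 0 := by
      rcases lt_or_eq_of_le (hc i) with h | h
      · exact absurd (Finset.mem_filter.2 ⟨Finset.mem_univ i, h⟩) hni
      · exact h.symm
    simp [this]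
  have hTne : T.Nonempty := by
    by_contra h
    rw [Finset.not_nonempty_iff_eq_empty] at h
    apply hx
    rw [← hsum, h, Finset.sum_empty]
  have := (stmt_3_aux B hsymm e hS T c
    (fun i hi => (Finset.mem_filter.1 hi).2)).2 hTne
  rwa [hsum] at this
end

section
/- Let V be a real vector space with a symmetric bilinear form that is negative definite on the cone generated by vectors e_1,...,e_n (i.e., every nonzero nonnegative combination x = Σ c_i e_i with c_i ≥ 0 satisfies (x,x) < 0), and suppose (e_i, e_j) ≥ 0 for i ≠ j. Then e_1,...,e_n are linearly independent. -/
/-- If the symmetric bilinear form is negative definite on the cone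
generated by `e 1, ..., e n` (every nonzero nonnegative combination has negative
square) and `(e i, e j) ≥ 0` for `i ≠ j`, then the `e i` are linearly independent. -/
theorem stmt_4 {V : Type*} [AddCommGroup V] [Module ℝ V]
    (B : V →ₗ[ℝ] V →ₗ[ℝ] ℝ) (hsymm : ∀ x y, B x y = B y x)
    {n : ℕ} (e : Fin n → V)
    (hij : ∀ i j, i ≠ j → 0 ≤ B (e i) (e j))
    (hneg : ∀ c : Fin n → ℝ, (∀ i, 0 ≤ c i) → (∃ i, c i ≠ 0) →
      B (∑ i, c i • e i) (∑ i, c i • e i) < 0) :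
    LinearIndependent ℝ e := by
  rw [Fintype.linearIndependent_iff]
  intro c hc i
  set p : Fin n → ℝ := fun i => max (c i) 0 with hp
  set m : Fin n → ℝ := fun i => max (-c i) 0 with hm
  have hpnn : ∀ i, 0 ≤ p i := fun i => le_max_right _ _
  have hmnn : ∀ i, 0 ≤ m i := fun i => le_max_right _ _
  have hcpm : ∀ i, c i = p i - m i := by
    intro i
    simp only [hp, hm]
    rcases le_total (c i) 0 with h | h
    · rw [max_eq_right h, max_eq_left (by linarith)]; ring
    · rw [max_eq_left h, max_eq_right (by linarith)]; ring
  have hpm0 : ∀ i, p i * m i = 0 := by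
    intro i
    simp only [hp, hm]
    rcases le_total (c i) 0 with h | h
    · rw [max_eq_right h]; ring
    · rw [max_eq_right (by linarith : -c i ≤ 0)]; ring
  have heq : ∑ i, p i • e i = ∑ i, m i • e i := by
    have : ∑ i, p i • e i - ∑ i, m i • e i = 0 := by
      rw [← Finset.sum_sub_distrib]
      rw [← hc]
      congr 1; ext j; rw [hcpm j, sub_smul]
    exact sub_eq_zero.mp this
  -- cross term is nonnegative
  have hcross : 0 ≤ B (∑ i, p i • e i) (∑ i, m i • e i) := by
    simp only [map_sum, map_smul, LinearMap.sum_apply, LinearMap.smul_apply, smul_eq_mul]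
    apply Finset.sum_nonneg
    intro j _
    rw [Finset.mul_sum]
    apply Finset.sum_nonneg
    intro i _
    rcases eq_or_ne i j with rfl | hne
    · rw [show m i * (p i * (B (e i)) (e i)) = p i * m i * (B (e i)) (e i) from by ring,
        hpm0 i, zero_mul]
    · nlinarith [mul_nonneg (hmnn j) (mul_nonneg (hpnn i) (hij i j hne))]
  have hpz : ∀ i, p i = 0 := by
    by_contra h
    push_neg at h
    obtain ⟨j, hj⟩ := h
    have := hneg p hpnn ⟨j, hj⟩
    rw [show (∑ i, p i • e i) = ∑ i, m i • e i from heq] at this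
    nth_rewrite 1 [← heq] at this
    linarith
  have hmz : ∀ i, m i = 0 := by
    by_contra h
    push_neg at h
    obtain ⟨j, hj⟩ := h
    have := hneg m hmnn ⟨j, hj⟩
    rw [← heq] at this
    nth_rewrite 1 [heq] at this
    linarith [hcross, hsymm (∑ i, p i • e i) (∑ i, m i • e i)]
  rw [hcpm i, hpz i, hmz i, sub_zero]
end
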